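/- Let n = N·ℓ with N ≥ 2, and let f be the indicator of the event that letter 1 is in the first ℓ-block I_1. Then Var(f) = (N−1)/N^2, and for every j ≠ 1, ν[(A_{1,j}f)^2] = 1/(2N), so that the block-average Dirichlet form satisfies D(f,f) = Var(f). -/

import Mathlib

open Finset

noncomputable def pexp (n : ℕ) (f : Equiv.Perm (Fin n) → ℝ) : ℝ :=
  (∑ η : Equiv.Perm (Fin n), f η) / (Nat.factorial n : ℝ)

noncomputable def pvar (n : ℕ) (f : Equiv.Perm (Fin n) → ℝ) : ℝ :=
  pexp n (fun η => (f η) ^ 2) - (pexp n f) ^ 2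

def outFix (N ℓ : ℕ) (i j : Fin N) (σ : Equiv.Perm (Fin (N * ℓ))) :
    Finset (Equiv.Perm (Fin (N * ℓ))) :=
  (univ : Finset (Equiv.Perm (Fin (N * ℓ)))).filter (fun η =>
    ∀ x : Fin (N * ℓ), x.val / ℓ ≠ i.val → x.val / ℓ ≠ j.val → η x = σ x)

noncomputable def Aavg (N ℓ : ℕ) (i j : Fin N) (f : Equiv.Perm (Fin (N * ℓ)) → ℝ)
    (σ : Equiv.Perm (Fin (N * ℓ))) : ℝ :=
  if i = j then 0
  else (∑ η ∈ outFix N ℓ i j σ, f η) / ((outFix N ℓ i j σ).card : ℝ) - f σ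

noncomputable def Dform (N ℓ : ℕ) (f : Equiv.Perm (Fin (N * ℓ)) → ℝ) : ℝ :=
  (1 / N) * ∑ i : Fin N, ∑ j : Fin N, pexp (N * ℓ) (fun σ => (Aavg N ℓ i j f σ) ^ 2)

open Classical in
/-- Indicator of the event that letter `0` (playing the role of "letter 1") lies in the
first `ℓ`-block `I_1 = {0, …, ℓ−1}`. -/
noncomputable def indFirstBlock (N ℓ : ℕ) (σ : Equiv.Perm (Fin (N * ℓ))) : ℝ :=
  if ∃ x : Fin (N * ℓ), x.val < ℓ ∧ (σ x).val = 0 then 1 else 0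



lemma card_fiber_const {n : ℕ} (z p q : Fin n) :
    ((univ : Finset (Equiv.Perm (Fin n))).filter (fun σ => σ.symm z = p)).card
    = ((univ : Finset (Equiv.Perm (Fin n))).filter (fun σ => σ.symm z = q)).card := by
  classical
  apply Finset.card_nbij' (fun σ => σ * Equiv.swap p q) (fun σ => σ * Equiv.swap p q)
  · intro σ hσ
    simp only [coe_filter, Set.mem_setOf_eq, mem_filter, mem_univ, true_and] at hσ ⊢
    simp [Equiv.Perm.mul_def, Equiv.symm_trans_apply, hσ]
  · intro σ hσ
    simp only [coe_filter, Set.mem_setOf_eq, mem_filter, mem_univ, true_and] at hσ ⊢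
    simp [Equiv.Perm.mul_def, Equiv.symm_trans_apply, hσ]
  · intro σ _; simp [mul_assoc]
  · intro σ _; simp [mul_assoc]

lemma card_pred_symm {n : ℕ} (z : Fin n) (Q : Fin n → Prop) [DecidablePred Q] :
    ((univ : Finset (Equiv.Perm (Fin n))).filter (fun σ => Q (σ.symm z))).card
    = ((univ : Finset (Fin n)).filter Q).card *
      ((univ : Finset (Equiv.Perm (Fin n))).filter (fun σ => σ.symm z = z)).card := by
  classical
  rw [Finset.card_eq_sum_card_fiberwise (f := fun σ : Equiv.Perm (Fin n) => σ.symm z)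
    (t := (univ : Finset (Fin n)).filter Q) (fun σ hσ => by
      simp only [coe_filter, Set.mem_setOf_eq, mem_filter, mem_univ, true_and] at hσ ⊢; exact hσ)]
  rw [Finset.sum_congr rfl (fun p hp => ?_), Finset.sum_const, smul_eq_mul]
  rw [show ((univ : Finset (Equiv.Perm (Fin n))).filter (fun σ => Q (σ.symm z))).filter
        (fun σ => σ.symm z = p)
      = (univ : Finset (Equiv.Perm (Fin n))).filter (fun σ => σ.symm z = p) from ?_]
  · exact card_fiber_const z p z
  · simp only [mem_filter, mem_univ, true_and] at hp
    ext σ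
    simp only [mem_filter, mem_univ, true_and, and_iff_right_iff_imp]
    intro h; rw [h]; exact hp

lemma mul_card_fiber {n : ℕ} (z : Fin n) :
    n * ((univ : Finset (Equiv.Perm (Fin n))).filter (fun σ => σ.symm z = z)).card
    = Nat.factorial n := by
  classical
  have h := Finset.card_eq_sum_card_fiberwise (f := fun σ : Equiv.Perm (Fin n) => σ.symm z)
    (s := (univ : Finset (Equiv.Perm (Fin n)))) (t := (univ : Finset (Fin n)))
    (fun σ _ => mem_univ _)
  rw [Finset.sum_congr rfl (fun p _ => card_fiber_const z p z),
    Finset.sum_const, smul_eq_mul] at h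
  simpa [Finset.card_univ, Fintype.card_perm, mul_comm] using h.symm

lemma pexp_ind {n : ℕ} (hn : 0 < n) (z : Fin n) (Q : Fin n → Prop) [DecidablePred Q] (c : ℝ) :
    pexp n (fun σ => if Q (σ.symm z) then c else 0)
    = c * (((univ : Finset (Fin n)).filter Q).card : ℝ) / n := by
  classical
  unfold pexp
  have hsum : (∑ σ : Equiv.Perm (Fin n), if Q (σ.symm z) then c else 0)
      = (((univ : Finset (Equiv.Perm (Fin n))).filter (fun σ => Q (σ.symm z))).card : ℝ) * c := by
    rw [← Finset.sum_filter, Finset.sum_const, nsmul_eq_mul]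
  rw [hsum, card_pred_symm z Q]
  have hf := mul_card_fiber z
  set m := ((univ : Finset (Equiv.Perm (Fin n))).filter (fun σ => σ.symm z = z)).card with hm
  have hm0 : (0:ℝ) < m := by
    have : m ≠ 0 := by
      intro h; rw [h, mul_zero] at hf; exact (Nat.factorial_ne_zero n) hf.symm
    positivity
  have hfac : (Nat.factorial n : ℝ) = n * m := by exact_mod_cast hf.symm
  rw [hfac]
  push_cast
  field_simp


lemma card_block (N ℓ : ℕ) (hℓ : 1 ≤ ℓ) (k : ℕ) (hk : k < N) :
    ((univ : Finset (Fin (N * ℓ))).filter (fun x => x.val / ℓ = k)).card = ℓ := by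
  have hℓ0 : 0 < ℓ := hℓ
  conv_rhs => rw [show ℓ = (univ : Finset (Fin ℓ)).card by simp]
  apply Finset.card_nbij' (fun x => (⟨x.val % ℓ, Nat.mod_lt _ hℓ0⟩ : Fin ℓ))
    (fun r => (⟨k * ℓ + r.val, by
      have : k * ℓ + r.val < k * ℓ + ℓ := by omega
      have h2 : k * ℓ + ℓ = (k+1) * ℓ := by ring
      have h3 : (k+1) * ℓ ≤ N * ℓ := Nat.mul_le_mul_right _ (by omega)
      omega⟩ : Fin (N * ℓ)))
  · intro x _; exact mem_univ _
  · intro r _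
    simp only [coe_filter, Set.mem_setOf_eq, Fin.val_mk, mem_filter, mem_univ, true_and]
    rw [add_comm, Nat.add_mul_div_right _ _ hℓ0, Nat.div_eq_of_lt r.isLt, zero_add]
  · intro x hx
    simp only [coe_filter, Set.mem_setOf_eq, mem_filter, mem_univ, true_and] at hx
    have h := Nat.div_add_mod x.val ℓ
    rw [hx, mul_comm ℓ k] at h
    apply Fin.ext
    simp only
    omega
  · intro r _
    apply Fin.ext
    simp only
    rw [add_comm, Nat.add_mul_mod_self_right, Nat.mod_eq_of_lt r.isLt]

def sb (N ℓ : ℕ) (hℓ : 0 < ℓ) (j : Fin N) (x : Fin (N * ℓ)) : Fin (N * ℓ) :=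
  ⟨if x.val / ℓ = 0 then x.val + j.val * ℓ
    else if x.val / ℓ = j.val then x.val - j.val * ℓ else x.val, by
    split_ifs with h1 h2
    · have hx : x.val < ℓ := by rwa [Nat.div_eq_zero_iff_lt hℓ] at h1
      have h3 : (j.val + 1) * ℓ ≤ N * ℓ := Nat.mul_le_mul_right _ j.isLt
      have h4 : (j.val + 1) * ℓ = j.val * ℓ + ℓ := by ring
      omega
    · have := x.isLt; omega
    · exact x.isLt⟩

section SwapBlocks
variable (N ℓ : ℕ) (hℓ : 0 < ℓ) (j : Fin N)

lemma sb_out (x : Fin (N * ℓ)) (h1 : x.val / ℓ ≠ 0) (h2 : x.val / ℓ ≠ j.val) :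
    sb N ℓ hℓ j x = x := by
  apply Fin.ext
  simp only [sb, if_neg h1, if_neg h2]

lemma sb_div0 (hjv : j.val ≠ 0) (x : Fin (N * ℓ)) (h1 : x.val / ℓ = 0) :
    (sb N ℓ hℓ j x).val / ℓ = j.val ∧ (sb N ℓ hℓ j x).val = x.val + j.val * ℓ := by
  have hx : x.val < ℓ := by rwa [Nat.div_eq_zero_iff_lt hℓ] at h1
  have hv : (sb N ℓ hℓ j x).val = x.val + j.val * ℓ := by simp only [sb, if_pos h1]
  refine ⟨?_, hv⟩
  rw [hv, Nat.add_mul_div_right _ _ hℓ, h1, zero_add]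

lemma sb_divj (hjv : j.val ≠ 0) (x : Fin (N * ℓ)) (h : x.val / ℓ = j.val) :
    (sb N ℓ hℓ j x).val < ℓ ∧ (sb N ℓ hℓ j x).val = x.val - j.val * ℓ := by
  have h1 : x.val / ℓ ≠ 0 := by rw [h]; exact hjv
  have hv : (sb N ℓ hℓ j x).val = x.val - j.val * ℓ := by simp only [sb, if_neg h1, if_pos h]
  have dm := Nat.div_add_mod x.val ℓ
  have hmlt : x.val % ℓ < ℓ := Nat.mod_lt _ hℓ
  rw [h, mul_comm] at dm
  exact ⟨by omega, hv⟩

lemma sb_invol (hjv : j.val ≠ 0) : Function.Involutive (sb N ℓ hℓ j) := by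
  intro x
  by_cases h1 : x.val / ℓ = 0
  · obtain ⟨hd, hv⟩ := sb_div0 N ℓ hℓ j hjv x h1
    obtain ⟨_, hv2⟩ := sb_divj N ℓ hℓ j hjv _ hd
    apply Fin.ext
    rw [hv2, hv]
    omega
  · by_cases h2 : x.val / ℓ = j.val
    · obtain ⟨hlt, hv⟩ := sb_divj N ℓ hℓ j hjv x h2
      have hd : (sb N ℓ hℓ j x).val / ℓ = 0 := Nat.div_eq_of_lt hlt
      obtain ⟨_, hv2⟩ := sb_div0 N ℓ hℓ j hjv _ hd
      apply Fin.ext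
      rw [hv2, hv]
      have dm := Nat.div_add_mod x.val ℓ
      rw [h2, mul_comm] at dm
      omega
    · rw [sb_out N ℓ hℓ j x h1 h2, sb_out N ℓ hℓ j x h1 h2]

end SwapBlocks

section Main
variable {N ℓ : ℕ}

lemma ind_eq (hn : 0 < N * ℓ) (hℓ : 0 < ℓ) (σ : Equiv.Perm (Fin (N * ℓ))) :
    indFirstBlock N ℓ σ = if ((σ.symm ⟨0, hn⟩).val < ℓ) then 1 else 0 := by
  classical
  unfold indFirstBlock
  refine if_congr ?_ rfl rfl
  constructor
  · rintro ⟨x, hx, h0⟩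
    have hσx : σ x = ⟨0, hn⟩ := Fin.ext h0
    rw [← hσx, Equiv.symm_apply_apply]
    exact hx
  · intro h
    exact ⟨σ.symm ⟨0, hn⟩, h, by rw [Equiv.apply_symm_apply]⟩

lemma agree_symm_eq (hn : 0 < N * ℓ) (i j : Fin N) (σ η : Equiv.Perm (Fin (N * ℓ)))
    (hagree : ∀ x : Fin (N * ℓ), x.val / ℓ ≠ i.val → x.val / ℓ ≠ j.val → η x = σ x)
    (h : ¬(((σ.symm ⟨0, hn⟩).val / ℓ = i.val) ∨ ((σ.symm ⟨0, hn⟩).val / ℓ = j.val))) :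
    η.symm ⟨0, hn⟩ = σ.symm ⟨0, hn⟩ := by
  push_neg at h
  have h2 := hagree (σ.symm ⟨0, hn⟩) h.1 h.2
  rw [Equiv.apply_symm_apply] at h2
  exact (Equiv.symm_apply_eq η).mpr h2.symm

lemma mem_S_iff (hn : 0 < N * ℓ) (i j : Fin N) (σ η : Equiv.Perm (Fin (N * ℓ)))
    (hagree : ∀ x : Fin (N * ℓ), x.val / ℓ ≠ i.val → x.val / ℓ ≠ j.val → η x = σ x) :
    (((η.symm ⟨0, hn⟩).val / ℓ = i.val) ∨ ((η.symm ⟨0, hn⟩).val / ℓ = j.val)) ↔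
    (((σ.symm ⟨0, hn⟩).val / ℓ = i.val) ∨ ((σ.symm ⟨0, hn⟩).val / ℓ = j.val)) := by
  constructor
  · intro hη
    by_contra hσ
    rw [agree_symm_eq hn i j σ η hagree hσ] at hη
    exact hσ hη
  · intro hσ
    by_contra hη
    have : σ.symm ⟨0, hn⟩ = η.symm ⟨0, hn⟩ :=
      agree_symm_eq hn i j η σ (fun x a b => (hagree x a b).symm) hη
    rw [this] at hσ
    exact hη hσ

lemma self_mem_outFix (i j : Fin N) (σ : Equiv.Perm (Fin (N * ℓ))) :
    σ ∈ outFix N ℓ i j σ := by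
  simp [outFix]

lemma Aavg_sq_i0 (hN : 2 ≤ N) (hℓ : 1 ≤ ℓ) (hn : 0 < N * ℓ) (j : Fin N)
    (hj : j ≠ ⟨0, by linarith⟩) (σ : Equiv.Perm (Fin (N * ℓ))) :
    (Aavg N ℓ ⟨0, by linarith⟩ j (indFirstBlock N ℓ) σ) ^ 2 =
    if (((σ.symm ⟨0, hn⟩).val / ℓ = 0) ∨ ((σ.symm ⟨0, hn⟩).val / ℓ = j.val)) then (1/4 : ℝ)
    else 0 := by
  classical
  set i0 : Fin N := ⟨0, by omega⟩ with hi0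
  have hjv : j.val ≠ 0 := fun h => hj (Fin.ext h)
  have hℓ0 : 0 < ℓ := hℓ
  set z : Fin (N * ℓ) := ⟨0, hn⟩ with hz
  set f := indFirstBlock N ℓ with hf
  have hij : i0 ≠ j := fun h => hj h.symm
  have hcard : 0 < (outFix N ℓ i0 j σ).card := card_pos.mpr ⟨σ, self_mem_outFix i0 j σ⟩
  have hcardR : ((outFix N ℓ i0 j σ).card : ℝ) ≠ 0 := by positivity
  rw [Aavg, if_neg hij]
  by_cases hmem : ((σ.symm z).val / ℓ = 0) ∨ ((σ.symm z).val / ℓ = j.val)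
  · rw [if_pos hmem]
    set θ : Equiv.Perm (Fin (N * ℓ)) := (sb_invol N ℓ hℓ0 j hjv).toPerm with hθ
    have hθapp : ∀ x, θ x = sb N ℓ hℓ0 j x := fun x => rfl
    have hθmem : ∀ η ∈ outFix N ℓ i0 j σ, η * θ ∈ outFix N ℓ i0 j σ := by
      intro η hη
      simp only [outFix, mem_filter, mem_univ, true_and] at hη ⊢
      intro x hx1 hx2
      have hθx : θ x = x := sb_out N ℓ hℓ0 j x hx1 hx2
      rw [Equiv.Perm.mul_apply, hθx]
      exact hη x hx1 hx2
    have hmul_invol : ∀ η : Equiv.Perm (Fin (N * ℓ)), (η * θ) * θ = η := by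
      intro η
      have hθθ : θ * θ = 1 := by
        ext x
        simp only [Equiv.Perm.mul_apply, Equiv.Perm.one_apply, hθapp]
        exact congrArg Fin.val (sb_invol N ℓ hℓ0 j hjv x)
      rw [mul_assoc, hθθ, mul_one]
    have hpair : ∀ η ∈ outFix N ℓ i0 j σ, f η + f (η * θ) = 1 := by
      intro η hη
      simp only [outFix, mem_filter, mem_univ, true_and] at hη
      have hηmem : ((η.symm z).val / ℓ = 0) ∨ ((η.symm z).val / ℓ = j.val) :=
        (mem_S_iff hn i0 j σ η hη).mpr hmem
      have hsymm : (η * θ).symm z = θ (η.symm z) := rfl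
      rw [hf, ind_eq hn hℓ0, ind_eq hn hℓ0, hsymm, hθapp]
      rcases hηmem with h0 | hjm
      · have hlt : (η.symm z).val < ℓ := by rwa [Nat.div_eq_zero_iff_lt hℓ0] at h0
        obtain ⟨hd, _⟩ := sb_div0 N ℓ hℓ0 j hjv _ h0
        have hnlt : ¬ ((sb N ℓ hℓ0 j (η.symm z)).val < ℓ) := by
          intro hc
          rw [Nat.div_eq_of_lt hc] at hd
          exact hjv hd.symm
        rw [if_pos hlt, if_neg hnlt]
        norm_num
      · have hnlt : ¬ ((η.symm z).val < ℓ) := by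
          intro hc
          rw [Nat.div_eq_of_lt hc] at hjm
          exact hjv hjm.symm
        obtain ⟨hlt, _⟩ := sb_divj N ℓ hℓ0 j hjv _ hjm
        rw [if_neg hnlt, if_pos hlt]
        norm_num
    have hsum2 : ∑ η ∈ outFix N ℓ i0 j σ, f (η * θ) = ∑ η ∈ outFix N ℓ i0 j σ, f η :=
      Finset.sum_nbij' (fun η => η * θ) (fun η => η * θ) hθmem hθmem
        (fun a _ => hmul_invol a) (fun a _ => hmul_invol a) (fun a _ => rfl)
    have h2 : 2 * ∑ η ∈ outFix N ℓ i0 j σ, f η = ((outFix N ℓ i0 j σ).card : ℝ) := by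
      have hc : ∑ η ∈ outFix N ℓ i0 j σ, (f η + f (η * θ))
          = ((outFix N ℓ i0 j σ).card : ℝ) := by
        rw [Finset.sum_congr rfl hpair, Finset.sum_const, nsmul_eq_mul, mul_one]
      rw [Finset.sum_add_distrib, hsum2] at hc
      linarith
    have hfσ : f σ = 0 ∨ f σ = 1 := by
      rw [hf, ind_eq hn hℓ0]
      split_ifs <;> simp
    have havg : (∑ η ∈ outFix N ℓ i0 j σ, f η) / ((outFix N ℓ i0 j σ).card : ℝ)
        = 1 / 2 := by
      field_simp
      linarith
    rw [havg]
    rcases hfσ with h | h <;> rw [h] <;> norm_num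
  · rw [if_neg hmem]
    have hall : ∀ η ∈ outFix N ℓ i0 j σ, f η = f σ := by
      intro η hη
      simp only [outFix, mem_filter, mem_univ, true_and] at hη
      rw [hf, ind_eq hn hℓ0, ind_eq hn hℓ0, agree_symm_eq hn i0 j σ η hη hmem]
    rw [Finset.sum_congr rfl hall, Finset.sum_const, nsmul_eq_mul]
    field_simp
    simp

end Main

section Assemble
variable {N ℓ : ℕ}

lemma Aavg_zero (hℓ : 1 ≤ ℓ) (hn : 0 < N * ℓ) (i j : Fin N) (hi : i.val ≠ 0)
    (hj : j.val ≠ 0) (σ : Equiv.Perm (Fin (N * ℓ))) :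
    Aavg N ℓ i j (indFirstBlock N ℓ) σ = 0 := by
  classical
  by_cases hij : i = j
  · rw [Aavg, if_pos hij]
  · rw [Aavg, if_neg hij]
    have hℓ0 : 0 < ℓ := hℓ
    have hcard : 0 < (outFix N ℓ i j σ).card := card_pos.mpr ⟨σ, self_mem_outFix i j σ⟩
    have hall : ∀ η ∈ outFix N ℓ i j σ, indFirstBlock N ℓ η = indFirstBlock N ℓ σ := by
      intro η hη
      simp only [outFix, mem_filter, mem_univ, true_and] at hη
      by_cases hmem : ((σ.symm ⟨0, hn⟩).val / ℓ = i.val) ∨ ((σ.symm ⟨0, hn⟩).val / ℓ = j.val)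
      · have hηmem := (mem_S_iff hn i j σ η hη).mpr hmem
        rw [ind_eq hn hℓ0, ind_eq hn hℓ0]
        have h1 : ¬ ((η.symm ⟨0, hn⟩).val < ℓ) := by
          intro hc
          rcases hηmem with h | h <;> rw [Nat.div_eq_of_lt hc] at h
          · exact hi h.symm
          · exact hj h.symm
        have h2 : ¬ ((σ.symm ⟨0, hn⟩).val < ℓ) := by
          intro hc
          rcases hmem with h | h <;> rw [Nat.div_eq_of_lt hc] at h
          · exact hi h.symm
          · exact hj h.symm
        rw [if_neg h1, if_neg h2]
      · rw [ind_eq hn hℓ0, ind_eq hn hℓ0, agree_symm_eq hn i j σ η hη hmem]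
    rw [Finset.sum_congr rfl hall, Finset.sum_const, nsmul_eq_mul]
    have : ((outFix N ℓ i j σ).card : ℝ) ≠ 0 := by positivity
    field_simp
    simp

lemma Aavg_symm (i j : Fin N) (f : Equiv.Perm (Fin (N * ℓ)) → ℝ)
    (σ : Equiv.Perm (Fin (N * ℓ))) : Aavg N ℓ i j f σ = Aavg N ℓ j i f σ := by
  have hout : outFix N ℓ i j σ = outFix N ℓ j i σ := by
    unfold outFix
    apply Finset.filter_congr
    intro η _
    constructor <;> (intro h x h1 h2; exact h x h2 h1)
  unfold Aavg
  rw [hout]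
  by_cases hij : i = j
  · rw [if_pos hij, if_pos hij.symm]
  · rw [if_neg hij, if_neg (fun h => hij h.symm)]

lemma pexp_f (hN : 2 ≤ N) (hℓ : 1 ≤ ℓ) :
    pexp (N * ℓ) (indFirstBlock N ℓ) = 1 / N := by
  classical
  have hℓ0 : 0 < ℓ := hℓ
  have hn : 0 < N * ℓ := Nat.mul_pos (by omega) hℓ0
  rw [show indFirstBlock N ℓ
      = fun σ : Equiv.Perm (Fin (N * ℓ)) =>
        if ((σ.symm ⟨0, hn⟩).val < ℓ) then (1:ℝ) else 0 from funext (ind_eq hn hℓ0)]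
  rw [pexp_ind hn ⟨0, hn⟩ (fun p => p.val < ℓ) 1]
  have hcardQ : ((univ : Finset (Fin (N * ℓ))).filter (fun p => p.val < ℓ)).card = ℓ := by
    rw [Finset.filter_congr (fun x _ => (Nat.div_eq_zero_iff_lt hℓ0).symm)]
    exact card_block N ℓ hℓ 0 (by omega)
  rw [hcardQ]
  have hN0 : (N:ℝ) ≠ 0 := by positivity
  have hℓ0R : (ℓ:ℝ) ≠ 0 := by positivity
  push_cast
  field_simp

lemma pexp_fsq (hN : 2 ≤ N) (hℓ : 1 ≤ ℓ) :
    pexp (N * ℓ) (fun σ => (indFirstBlock N ℓ σ) ^ 2) = 1 / N := by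
  have hℓ0 : 0 < ℓ := hℓ
  have hn : 0 < N * ℓ := Nat.mul_pos (by omega) hℓ0
  rw [show (fun σ : Equiv.Perm (Fin (N * ℓ)) => (indFirstBlock N ℓ σ) ^ 2)
      = indFirstBlock N ℓ from funext fun σ => by
        rw [ind_eq hn hℓ0]; split_ifs <;> norm_num]
  exact pexp_f hN hℓ

lemma pvar_f (hN : 2 ≤ N) (hℓ : 1 ≤ ℓ) :
    pvar (N * ℓ) (indFirstBlock N ℓ) = ((N : ℝ) - 1) / (N : ℝ) ^ 2 := by
  rw [pvar, pexp_f hN hℓ, pexp_fsq hN hℓ]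
  have hN0 : (N:ℝ) ≠ 0 := by positivity
  field_simp

lemma part2 (hN : 2 ≤ N) (hℓ : 1 ≤ ℓ) (j : Fin N) (hj : j ≠ ⟨0, by linarith⟩) :
    pexp (N * ℓ) (fun σ => (Aavg N ℓ ⟨0, by linarith⟩ j (indFirstBlock N ℓ) σ) ^ 2) =
    1 / (2 * (N : ℝ)) := by
  classical
  have hℓ0 : 0 < ℓ := hℓ
  have hn : 0 < N * ℓ := Nat.mul_pos (by omega) hℓ0
  have hjv : j.val ≠ 0 := fun h => hj (Fin.ext h)
  rw [show (fun σ : Equiv.Perm (Fin (N * ℓ)) =>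
        (Aavg N ℓ ⟨0, by omega⟩ j (indFirstBlock N ℓ) σ) ^ 2)
      = fun σ : Equiv.Perm (Fin (N * ℓ)) =>
        if (((σ.symm ⟨0, hn⟩).val / ℓ = 0) ∨ ((σ.symm ⟨0, hn⟩).val / ℓ = j.val))
        then (1/4 : ℝ) else 0 from funext (Aavg_sq_i0 hN hℓ hn j hj)]
  rw [pexp_ind hn ⟨0, hn⟩ (fun p => p.val / ℓ = 0 ∨ p.val / ℓ = j.val) (1/4)]
  have hcard : ((univ : Finset (Fin (N * ℓ))).filter
      (fun p => p.val / ℓ = 0 ∨ p.val / ℓ = j.val)).card = 2 * ℓ := by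
    rw [Finset.filter_or, Finset.card_union_of_disjoint]
    · rw [card_block N ℓ hℓ 0 (by omega), card_block N ℓ hℓ j.val j.isLt]
      ring
    · rw [Finset.disjoint_left]
      intro a ha hb
      simp only [mem_filter, mem_univ, true_and] at ha hb
      rw [ha] at hb
      exact hjv hb.symm
  rw [hcard]
  have hN0 : (N:ℝ) ≠ 0 := by positivity
  have hℓ0R : (ℓ:ℝ) ≠ 0 := by positivity
  push_cast
  field_simp
  ring

/-- for `f` the indicator that letter 1 is in the first `ℓ`-block,
`Var(f) = (N−1)/N²`, for every `j ≠ 1` one has `ν[(A_{1,j} f)²] = 1/(2N)`, and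
`D(f,f) = Var(f)`. -/
theorem blockAverage_testFunction (N ℓ : ℕ) (hN : 2 ≤ N) (hℓ : 1 ≤ ℓ) :
    pvar (N * ℓ) (indFirstBlock N ℓ) = ((N : ℝ) - 1) / (N : ℝ) ^ 2 ∧
    (∀ j : Fin N, j ≠ ⟨0, by omega⟩ →
      pexp (N * ℓ) (fun σ => (Aavg N ℓ ⟨0, by omega⟩ j (indFirstBlock N ℓ) σ) ^ 2) =
        1 / (2 * (N : ℝ))) ∧
    Dform N ℓ (indFirstBlock N ℓ) = pvar (N * ℓ) (indFirstBlock N ℓ) := by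
  classical
  have hℓ0 : 0 < ℓ := hℓ
  have hn : 0 < N * ℓ := Nat.mul_pos (by omega) hℓ0
  refine ⟨pvar_f hN hℓ, fun j hj => part2 hN hℓ j hj, ?_⟩
  set i0 : Fin N := ⟨0, by omega⟩ with hi0
  have hT : ∀ i j : Fin N,
      pexp (N * ℓ) (fun σ => (Aavg N ℓ i j (indFirstBlock N ℓ) σ) ^ 2)
      = if (i = i0 ∧ j ≠ i0) ∨ (i ≠ i0 ∧ j = i0) then 1 / (2 * (N:ℝ)) else 0 := by
    intro i j
    by_cases hi : i = i0
    · by_cases hj : j = i0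
      · subst hi; subst hj
        rw [if_neg (by simp)]
        rw [show (fun σ : Equiv.Perm (Fin (N * ℓ)) =>
            (Aavg N ℓ i0 i0 (indFirstBlock N ℓ) σ) ^ 2) = fun _ => (0:ℝ) from
          funext fun σ => by rw [Aavg, if_pos rfl]; norm_num]
        simp [pexp]
      · subst hi
        rw [if_pos (Or.inl ⟨rfl, hj⟩)]
        exact part2 hN hℓ j hj
    · by_cases hj : j = i0
      · subst hj
        rw [if_pos (Or.inr ⟨hi, rfl⟩)]
        rw [show (fun σ : Equiv.Perm (Fin (N * ℓ)) =>
            (Aavg N ℓ i i0 (indFirstBlock N ℓ) σ) ^ 2)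
          = fun σ : Equiv.Perm (Fin (N * ℓ)) =>
            (Aavg N ℓ i0 i (indFirstBlock N ℓ) σ) ^ 2 from
          funext fun σ => by rw [Aavg_symm]]
        exact part2 hN hℓ i hi
      · rw [if_neg (by tauto)]
        have hiv : i.val ≠ 0 := fun h => hi (Fin.ext h)
        have hjv : j.val ≠ 0 := fun h => hj (Fin.ext h)
        rw [show (fun σ : Equiv.Perm (Fin (N * ℓ)) =>
            (Aavg N ℓ i j (indFirstBlock N ℓ) σ) ^ 2) = fun _ => (0:ℝ) from
          funext fun σ => by rw [Aavg_zero hℓ hn i j hiv hjv σ]; norm_num]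
        simp [pexp]
  rw [Dform, pvar_f hN hℓ]
  rw [Finset.sum_congr rfl (fun i _ => Finset.sum_congr rfl (fun j _ => hT i j))]
  have hinner : ∀ i : Fin N,
      (∑ j : Fin N, if (i = i0 ∧ j ≠ i0) ∨ (i ≠ i0 ∧ j = i0) then 1 / (2 * (N:ℝ)) else 0)
      = if i = i0 then ((N:ℝ) - 1) / (2 * N) else 1 / (2 * N) := by
    intro i
    by_cases hi : i = i0
    · subst hi
      rw [if_pos rfl]
      rw [Finset.sum_congr rfl (fun j _ => show
          (if (i0 = i0 ∧ j ≠ i0) ∨ (i0 ≠ i0 ∧ j = i0) then 1 / (2 * (N:ℝ)) else 0)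
          = 1 / (2 * (N:ℝ)) - (if j = i0 then 1 / (2 * (N:ℝ)) else 0) from by
        by_cases hj : j = i0 <;> simp [hj])]
      rw [Finset.sum_sub_distrib, Finset.sum_const, Finset.sum_ite_eq' univ i0
        (fun _ => 1 / (2 * (N:ℝ)))]
      simp only [card_univ, Fintype.card_fin, nsmul_eq_mul, mem_univ, if_pos]
      field_simp
    · rw [if_neg hi]
      rw [Finset.sum_congr rfl (fun j _ => show
          (if (i = i0 ∧ j ≠ i0) ∨ (i ≠ i0 ∧ j = i0) then 1 / (2 * (N:ℝ)) else 0)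
          = (if j = i0 then 1 / (2 * (N:ℝ)) else 0) from by
        by_cases hj : j = i0 <;> simp [hj, hi])]
      rw [Finset.sum_ite_eq' univ i0 (fun _ => 1 / (2 * (N:ℝ)))]
      simp
  rw [Finset.sum_congr rfl (fun i _ => hinner i)]
  rw [Finset.sum_congr rfl (fun i _ => show
      (if i = i0 then ((N:ℝ) - 1) / (2 * N) else 1 / (2 * N))
      = (if i = i0 then ((N:ℝ) - 1) / (2 * N) - 1 / (2 * N) else 0) + 1 / (2 * N) from by
    by_cases hi : i = i0 <;> simp [hi])]
  rw [Finset.sum_add_distrib, Finset.sum_const, Finset.sum_ite_eq' univ i0 _]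
  simp only [card_univ, Fintype.card_fin, nsmul_eq_mul, mem_univ, if_pos]
  have hN0 : (N:ℝ) ≠ 0 := by positivity
  field_simp
  ring
end Assemble
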